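/- Let q be a prime power and f : F_q^k → S a function with E = |Im(f)| and ℓ = min_{α ∈ Im(f)} |f^{-1}(α)|, and let d_d ≤ d_f be positive integers with t_f = ⌊(d_f − 1)/2⌋. Suppose there exists an (f : d_d, d_f)-FCC of length n. Then E · m ≤ q^n, where m is the minimum of |B(v_1, t_f) ∪ ⋯ ∪ B(v_ℓ, t_f)| over all choices of ℓ pairwise distinct vectors v_1, …, v_ℓ ∈ F_q^n satisfying d(v_i, v_j) ≥ d_d for all i ≠ j. -/

import Mathlib

/-- **generalized Hamming bound for `(f : d_d, d_f)`-FCCs.** If an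
`(f : d_d, d_f)`-FCC of length `n` exists, with `t_f = ⌊(d_f − 1)/2⌋`, `E = |Im(f)|`,
`ℓ = min_{α ∈ Im(f)} |f⁻¹(α)|`, and `m` the minimum size of a union of `ℓ` Hamming balls of
radius `t_f` around distinct centers pairwise at distance at least `d_d` in `F_q^n`, then
`E · m ≤ q^n`. -/
theorem hamming_bound_FCC_data_protection
    {F S : Type*} [Field F] [Fintype F] [DecidableEq F]
    {k n : ℕ} (hkn : k ≤ n) (f : (Fin k → F) → S)
    (dd df : ℕ) (hdd : 1 ≤ dd) (hddf : dd ≤ df)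
    (E l m tf : ℕ) (htf : tf = (df - 1) / 2)
    (hE : E = Nat.card (Set.range f))
    (hl1 : ∀ u : Fin k → F, l ≤ Nat.card {v : Fin k → F | f v = f u})
    (hl2 : ∃ u : Fin k → F, Nat.card {v : Fin k → F | f v = f u} = l)
    (hm : m = sInf {c : ℕ | ∃ v : Fin l → Fin n → F, Function.Injective v ∧
      (∀ i j, i ≠ j → dd ≤ hammingDist (v i) (v j)) ∧
      Nat.card (⋃ j, {x : Fin n → F | hammingDist x (v j) ≤ tf}) = c})
    (enc : (Fin k → F) → (Fin n → F))
    (hsys : ∀ (u : Fin k → F) (i : Fin k), enc u (Fin.castLE hkn i) = u i)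
    (hdist : ∀ u v : Fin k → F, u ≠ v → dd ≤ hammingDist (enc u) (enc v))
    (hfdist : ∀ u v : Fin k → F, f u ≠ f v → df ≤ hammingDist (enc u) (enc v)) :
    E * m ≤ Fintype.card F ^ n := by
  classical
  -- enc is injective
  have hencinj : Function.Injective enc := by
    intro u v h
    funext i
    have h1 := hsys u i
    have h2 := hsys v i
    rw [h] at h1
    rw [h2] at h1
    exact h1.symm
  have hdf : 1 ≤ df := le_trans hdd hddf
  have h2tf : 2 * tf < df := by
    clear hm
    subst htf
    have : (df - 1) / 2 * 2 ≤ df - 1 := Nat.div_mul_le_self _ _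
    omega
  -- balls
  set B : (Fin k → F) → Set (Fin n → F) := fun u => {x | hammingDist x (enc u) ≤ tf} with hB
  have hBdisj : ∀ u u' : Fin k → F, f u ≠ f u' → Disjoint (B u) (B u') := by
    intro u u' hne
    rw [Set.disjoint_left]
    intro x hx hx'
    have hd := hfdist u u' hne
    have : hammingDist (enc u) (enc u') ≤ tf + tf :=
      le_trans (hammingDist_triangle_left _ _ x) (Nat.add_le_add hx hx')
    clear hm
    omega
  set T : S → Set (Fin n → F) := fun α => ⋃ u ∈ {u : Fin k → F | f u = α}, B u with hT
  have hTdisj : ∀ α β : S, α ≠ β → Disjoint (T α) (T β) := by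
    intro α β hne
    rw [Set.disjoint_left]
    intro x hx hx'
    simp only [hT, Set.mem_iUnion, Set.mem_setOf_eq] at hx hx'
    obtain ⟨u, hu, hxu⟩ := hx
    obtain ⟨u', hu', hxu'⟩ := hx'
    have : f u ≠ f u' := by rw [hu, hu']; exact hne
    exact Set.disjoint_left.mp (hBdisj u u' this) hxu hxu'
  have hmle : ∀ α ∈ Set.range f, m ≤ Nat.card (T α) := by
    rintro α ⟨u0, rfl⟩
    -- embedding Fin l into preimage
    have hcard : l ≤ Nat.card {v : Fin k → F | f v = f u0} := hl1 u0
    have : Nonempty (Fin l ↪ {v : Fin k → F | f v = f u0}) := by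
      have := Fintype.ofFinite {v : Fin k → F | f v = f u0}
      apply Function.Embedding.nonempty_of_card_le
      rwa [Fintype.card_fin, ← Nat.card_eq_fintype_card]
    obtain ⟨g⟩ := this
    set v : Fin l → Fin n → F := fun i => enc (g i) with hv
    have hvinj : Function.Injective v :=
      hencinj.comp (Subtype.val_injective.comp g.injective)
    have hvd : ∀ i j, i ≠ j → dd ≤ hammingDist (v i) (v j) := by
      intro i j hij
      exact hdist _ _ (fun h => hij (g.injective (Subtype.val_injective h)))
    have hmem : Nat.card (⋃ j, {x : Fin n → F | hammingDist x (v j) ≤ tf}) ∈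
        {c : ℕ | ∃ v : Fin l → Fin n → F, Function.Injective v ∧
          (∀ i j, i ≠ j → dd ≤ hammingDist (v i) (v j)) ∧
          Nat.card (⋃ j, {x : Fin n → F | hammingDist x (v j) ≤ tf}) = c} :=
      ⟨v, hvinj, hvd, rfl⟩
    refine le_trans (hm ▸ Nat.sInf_le hmem) ?_
    apply Nat.card_mono (Set.toFinite _)
    intro x hx
    simp only [Set.mem_iUnion] at hx
    obtain ⟨j, hj⟩ := hx
    simp only [hT, Set.mem_iUnion, Set.mem_setOf_eq]
    exact ⟨g j, (g j).2, hj⟩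
  -- counting
  set A : Finset S := (Set.finite_range f).toFinset with hA
  have hEA : E = A.card := by
    rw [hE, Nat.card_eq_fintype_card, Set.Finite.card_toFinset]
  have hsum : A.card * m ≤ ∑ α ∈ A, Nat.card (T α) := by
    have := Finset.card_nsmul_le_sum A (fun α => Nat.card (T α)) m ?_
    · simpa [smul_eq_mul] using this
    · intro α hα
      exact hmle α ((Set.Finite.mem_toFinset _).mp hα)
  have hfin : ∀ α, Nat.card (T α) = (T α).toFinset.card := fun α => by
    rw [Set.toFinset_card, Nat.card_eq_fintype_card]
  have hle2 : ∑ α ∈ A, (T α).toFinset.card ≤ Fintype.card F ^ n := by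
    rw [← Finset.card_biUnion ?_]
    · calc (A.biUnion fun α => (T α).toFinset).card ≤ Fintype.card (Fin n → F) :=
            Finset.card_le_univ _
        _ = Fintype.card F ^ n := by simp
    · intro x hx y hy hxy
      dsimp only [Function.onFun]
      rw [Set.disjoint_toFinset]
      exact hTdisj x y hxy
  calc E * m = A.card * m := by rw [hEA]
    _ ≤ ∑ α ∈ A, Nat.card (T α) := hsum
    _ = ∑ α ∈ A, (T α).toFinset.card := by simp_rw [hfin]
    _ ≤ Fintype.card F ^ n := hle2
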